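/- Let k, s, d be integers with 1 ≤ s ≤ k/2 and 1 ≤ d ≤ k−1, let κ(s) = (k−s+1)/(2s+1), and let I_d = Σ_{i ≤ d, i even} C(s,i)·C(k−s, d−i) (the sum over even i, including i = 0, of products of binomial coefficients). Then: (1) if d ≤ k/2 and we set β = (k−d+1)/d, then I_d ≤ (1 − 2s/(5β))·C(k,d) when d < κ(s), and I_d ≤ (4/5)·C(k,d) when d ≥ κ(s); (2) if d > k/2 and we set β′ = (d+1)/(k−d), then I_d ≤ (1 − 2s/(5β′))·C(k,d) when d > k − κ(s), and I_d ≤ (4/5)·C(k,d) when d ≤ k − κ(s). -/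

import Mathlib

open Finset

/-- `κ(s) = (k−s+1)/(2s+1)` as a real number. -/
noncomputable def kappa (k s : ℕ) : ℝ := ((k : ℝ) - s + 1) / (2 * s + 1)

/-- `I_d = Σ_{i ≤ d, i even} C(s,i)·C(k−s, d−i)`. -/
def evenSum (k s d : ℕ) : ℕ :=
  ∑ i ∈ Finset.range (d + 1), if Even i then s.choose i * (k - s).choose (d - i) else 0

set_option maxHeartbeats 1000000
open Polynomial

def oddSum (k s d : ℕ) : ℕ :=
  ∑ i ∈ Finset.range (d + 1), if ¬ Even i then s.choose i * (k - s).choose (d - i) else 0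
def altSum (k s d : ℕ) : ℤ :=
  ∑ i ∈ Finset.range (d + 1), (-1) ^ i * (s.choose i * (k - s).choose (d - i) : ℤ)
def altB (s m d : ℕ) : ℤ :=
  ∑ j ∈ Finset.range (d / 2 + 1), (-1) ^ j * (s.choose j * m.choose (d - 2 * j) : ℤ)
def bSum (s m d : ℕ) : ℕ :=
  ∑ j ∈ Finset.range (d / 2 + 1), s.choose j * m.choose (d - 2 * j)


lemma vander (a b d : ℕ) :
    (a + b).choose d = ∑ i ∈ Finset.range (d + 1), a.choose i * b.choose (d - i) := by
  rw [Nat.add_choose_eq, Finset.Nat.sum_antidiagonal_eq_sum_range_succ_mk]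

lemma even_add_odd (k s d : ℕ) (hs : s ≤ k) :
    evenSum k s d + oddSum k s d = k.choose d := by
  have h : k = s + (k - s) := by omega
  rw [evenSum, oddSum, ← Finset.sum_add_distrib]
  conv_rhs => rw [h, vander]
  apply Finset.sum_congr rfl
  intro i _
  by_cases hi : Even i <;> simp [hi]

lemma mul_choose_pred (n r : ℕ) (hn : 1 ≤ n) :
    n * (n - 1).choose r = n.choose r * (n - r) := by
  have h1 := Nat.add_one_mul_choose_eq (n - 1) r
  have h2 := Nat.choose_succ_right_eq n r
  have hs : (n - 1) + 1 = n := by omega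
  rw [hs] at h1
  rw [h1]
  simpa using h2

lemma choose_pred_right (m d : ℕ) (hd : 1 ≤ d) (hdm : d ≤ m) :
    m.choose d * d = m.choose (d - 1) * (m - d + 1) := by
  have h := Nat.choose_succ_right_eq m (d - 1)
  have h1 : d - 1 + 1 = d := by omega
  have h2 : m - (d - 1) = m - d + 1 := by omega
  rw [h1, h2] at h
  exact h

lemma chain (k s r : ℕ) (hs : 1 ≤ s) (hsk : 2 * s ≤ k) (hr : (2 * s + 1) * r ≤ k - s) :
    ∀ j, j ≤ s → (2 * s) ^ j * k.choose r ≤ (2 * s + 1) ^ j * (k - j).choose r := by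
  intro j
  induction j with
  | zero => simp
  | succ j ih =>
    intro hj1
    have hj : j ≤ s := by omega
    have ihj := ih hj
    have hkj : 1 ≤ k - j := by omega
    have hrkj : (2 * s + 1) * r ≤ k - j := by omega
    have key : 2 * s * (k - j).choose r ≤ (2 * s + 1) * (k - j - 1).choose r := by
      have hm := mul_choose_pred (k - j) r hkj
      have h2 : (2 * s * (k - j).choose r) * (k - j) ≤ ((2 * s + 1) * (k - j - 1).choose r) * (k - j) := by
        calc (2 * s * (k - j).choose r) * (k - j) = (k - j).choose r * (2 * s * (k - j)) := by ring
        _ ≤ (k - j).choose r * ((2 * s + 1) * (k - j - r)) := by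
            apply Nat.mul_le_mul_left
            have h3 : r ≤ k - j := le_trans (Nat.le_mul_of_pos_left r (by omega)) hrkj
            zify [h3]
            zify at hrkj
            nlinarith [hrkj]
        _ = ((2 * s + 1) * ((k - j) * (k - j - 1).choose r)) := by rw [hm]; ring
        _ = ((2 * s + 1) * (k - j - 1).choose r) * (k - j) := by ring
      exact Nat.le_of_mul_le_mul_right h2 (by omega)
    calc (2 * s) ^ (j + 1) * k.choose r = 2 * s * ((2 * s) ^ j * k.choose r) := by ring
      _ ≤ 2 * s * ((2 * s + 1) ^ j * (k - j).choose r) := Nat.mul_le_mul_left _ ihj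
      _ = (2 * s + 1) ^ j * (2 * s * (k - j).choose r) := by ring
      _ ≤ (2 * s + 1) ^ j * ((2 * s + 1) * (k - j - 1).choose r) := Nat.mul_le_mul_left _ key
      _ = (2 * s + 1) ^ (j + 1) * (k - (j + 1)).choose r := by
          rw [Nat.sub_sub]; ring

lemma exp_half_lt : Real.exp (1 / 2) < 5 / 2 := by
  have h1 : Real.exp (1 / 2) ^ 2 = Real.exp 1 := by
    rw [← Real.exp_nat_mul]
    norm_num
  have h2 : Real.exp 1 < (5 / 2 : ℝ) ^ 2 := by
    have := Real.exp_one_lt_d9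
    norm_num at this ⊢
    linarith
  have h3 : Real.exp (1 / 2) ^ 2 < (5 / 2 : ℝ) ^ 2 := by rw [h1]; exact h2
  exact lt_of_pow_lt_pow_left₀ 2 (by norm_num) h3

lemma pow_ratio (s : ℕ) (hs : 1 ≤ s) :
    ((2 * s + 1 : ℝ)) ^ s ≤ 5 / 2 * (2 * s : ℝ) ^ s := by
  have hs0 : (0:ℝ) < 2 * s := by positivity
  set x : ℝ := 1 / (2 * s) with hx
  have hx0 : (0:ℝ) < x := by positivity
  have heq : (2 * s + 1 : ℝ) = (2 * s) * (1 + x) := by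
    rw [hx]
    field_simp
  rw [heq, mul_pow]
  have h1 : (1 + x) ^ s ≤ Real.exp x ^ s := by
    apply pow_le_pow_left₀ (by positivity)
    linarith [Real.add_one_le_exp x]
  have h2 : Real.exp x ^ s = Real.exp (s * x) := (Real.exp_nat_mul x s).symm
  have h3 : (s : ℝ) * x = 1 / 2 := by
    rw [hx]
    field_simp
  have h4 : (1 + x) ^ s ≤ 5 / 2 := by
    rw [h2, h3] at h1
    linarith [exp_half_lt]
  calc (2 * (s:ℝ)) ^ s * (1 + x) ^ s ≤ (2 * (s:ℝ)) ^ s * (5 / 2) := by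
        apply mul_le_mul_of_nonneg_left h4 (by positivity)
    _ = 5 / 2 * (2 * (s:ℝ)) ^ s := by ring

lemma ratio_bound (k s r : ℕ) (hs : 1 ≤ s) (hsk : 2 * s ≤ k) (hr : (2 * s + 1) * r ≤ k - s) :
    (2 : ℝ) / 5 * (k.choose r : ℝ) ≤ ((k - s).choose r : ℝ) := by
  have h := chain k s r hs hsk hr s le_rfl
  have hcast : ((2 * s : ℕ) : ℝ) ^ s * (k.choose r : ℝ) ≤ ((2 * s + 1 : ℕ) : ℝ) ^ s * (((k - s).choose r : ℕ) : ℝ) := by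
    exact_mod_cast h
  have hp := pow_ratio s hs
  have h2s : (0:ℝ) < (2 * s : ℝ) ^ s := by positivity
  push_cast at hcast
  nlinarith [Nat.choose_pos (show r ≤ k - s by nlinarith), (k - s).choose r, hcast, hp,
    mul_le_mul_of_nonneg_right hp (show (0:ℝ) ≤ ((k - s).choose r : ℝ) by positivity)]

lemma coeff_one_sub_X_pow (s i : ℕ) :
    ((1 - X : Polynomial ℤ) ^ s).coeff i = (-1) ^ i * s.choose i := by
  have h : (1 - X : Polynomial ℤ) = Polynomial.C (-1) * X + 1 := by
    simp only [Polynomial.C_neg, Polynomial.C_1]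
    ring
  rw [h, add_pow, Polynomial.finset_sum_coeff]
  have hterm : ∀ b, (Polynomial.C (-1 : ℤ) * X) ^ b * 1 ^ (s - b) * (s.choose b : Polynomial ℤ)
      = Polynomial.C ((-1 : ℤ) ^ b * s.choose b) * X ^ b := by
    intro b
    have hc : ((s.choose b : Polynomial ℤ)) = Polynomial.C (s.choose b : ℤ) := by
      simp
    rw [one_pow, mul_one, hc, mul_pow, ← Polynomial.C_pow, Polynomial.C_mul]
    ring
  have hcong : ∀ b ∈ range (s + 1),
      ((Polynomial.C (-1:ℤ) * X) ^ b * 1 ^ (s - b) * (s.choose b : Polynomial ℤ)).coeff i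
      = ((-1 : ℤ) ^ b * s.choose b) * (if i = b then 1 else 0) := by
    intro b _
    rw [hterm, Polynomial.coeff_C_mul, Polynomial.coeff_X_pow]
  rw [Finset.sum_congr rfl hcong]
  by_cases hi : i ≤ s
  · rw [Finset.sum_eq_single i]
    · simp
    · intro b _ hbi
      simp [Ne.symm hbi]
    · intro hnot
      exact absurd (Finset.mem_range.mpr (by omega)) hnot
  · rw [Finset.sum_eq_zero, Nat.choose_eq_zero_of_lt (by omega : s < i)]
    · simp
    · intro b hb
      simp only [Finset.mem_range] at hb
      rw [if_neg (by omega : ¬ i = b), mul_zero]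

lemma coeff_one_sub_X_sq_pow (s t : ℕ) :
    ((1 - X ^ 2 : Polynomial ℤ) ^ s).coeff t
      = if Even t then ((-1 : ℤ) ^ (t / 2) * s.choose (t / 2) : ℤ) else 0 := by
  have h : (1 - X ^ 2 : Polynomial ℤ) = Polynomial.C (-1) * X ^ 2 + 1 := by
    simp only [Polynomial.C_neg, Polynomial.C_1]
    ring
  rw [h, add_pow, Polynomial.finset_sum_coeff]
  have hcong : ∀ b ∈ range (s + 1),
      ((Polynomial.C (-1:ℤ) * X ^ 2) ^ b * 1 ^ (s - b) * (s.choose b : Polynomial ℤ)).coeff t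
      = ((-1 : ℤ) ^ b * s.choose b) * (if t = 2 * b then 1 else 0) := by
    intro b _
    have hterm : (Polynomial.C (-1 : ℤ) * X ^ 2) ^ b * 1 ^ (s - b) * (s.choose b : Polynomial ℤ)
        = Polynomial.C ((-1 : ℤ) ^ b * s.choose b) * X ^ (2 * b) := by
      have hc : ((s.choose b : Polynomial ℤ)) = Polynomial.C (s.choose b : ℤ) := by simp
      rw [one_pow, mul_one, hc, mul_pow, ← Polynomial.C_pow, Polynomial.C_mul, ← pow_mul]
      ring_nf
    rw [hterm, Polynomial.coeff_C_mul, Polynomial.coeff_X_pow]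
  rw [Finset.sum_congr rfl hcong]
  by_cases ht : Even t
  · obtain ⟨u, hu⟩ := ht
    have htu : t / 2 = u := by omega
    rw [if_pos ⟨u, hu⟩, htu]
    by_cases hus : u ≤ s
    · rw [Finset.sum_eq_single u]
      · rw [if_pos (by omega)]
        ring
      · intro b _ hbu
        rw [if_neg (by omega), mul_zero]
      · intro hnot
        exact absurd (Finset.mem_range.mpr (by omega)) hnot
    · rw [Finset.sum_eq_zero, Nat.choose_eq_zero_of_lt (by omega : s < u)]
      · simp
      · intro b hb
        simp only [Finset.mem_range] at hb
        rw [if_neg (by omega), mul_zero]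
  · rw [if_neg ht, Finset.sum_eq_zero]
    intro b _
    rw [if_neg (fun hc => ht ⟨b, by omega⟩), mul_zero]

lemma alt_eq (k s d : ℕ) (hsk : 2 * s ≤ k) : altSum k s d = altB s (k - 2 * s) d := by
  set m := k - 2 * s with hm
  have hks : k - s = s + m := by omega
  have hP : ((1 - X : Polynomial ℤ) ^ s) * ((1 + X) ^ (k - s))
      = ((1 - X ^ 2 : Polynomial ℤ) ^ s) * ((1 + X) ^ m) := by
    rw [hks, pow_add, ← mul_assoc, ← mul_pow]
    ring_nf
  have hL : (((1 - X : Polynomial ℤ) ^ s) * ((1 + X) ^ (k - s))).coeff d = altSum k s d := by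
    rw [Polynomial.coeff_mul, Finset.Nat.sum_antidiagonal_eq_sum_range_succ_mk, altSum]
    apply Finset.sum_congr rfl
    intro i _
    rw [coeff_one_sub_X_pow, Polynomial.coeff_one_add_X_pow]
    push_cast
    ring
  have hR : (((1 - X ^ 2 : Polynomial ℤ) ^ s) * ((1 + X) ^ m)).coeff d = altB s m d := by
    rw [Polynomial.coeff_mul, Finset.Nat.sum_antidiagonal_eq_sum_range_succ_mk]
    have h1 : ∀ t ∈ range (d + 1),
        ((1 - X ^ 2 : Polynomial ℤ) ^ s).coeff t * ((1 + X : Polynomial ℤ) ^ m).coeff (d - t)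
        = if Even t then ((-1 : ℤ) ^ (t / 2) * (s.choose (t / 2) * m.choose (d - t) : ℤ)) else 0 := by
      intro t _
      rw [coeff_one_sub_X_sq_pow, Polynomial.coeff_one_add_X_pow]
      by_cases ht : Even t
      · rw [if_pos ht, if_pos ht]
        push_cast
        ring
      · rw [if_neg ht, if_neg ht, zero_mul]
    rw [Finset.sum_congr rfl h1, ← Finset.sum_filter, altB]
    apply Finset.sum_nbij' (fun t => t / 2) (fun j => 2 * j)
    · intro a ha
      simp only [Finset.mem_filter, Finset.mem_range] at ha
      simp only [Finset.mem_range]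
      omega
    · intro j hj
      simp only [Finset.mem_range] at hj
      simp only [Finset.mem_filter, Finset.mem_range]
      constructor
      · omega
      · exact ⟨j, by omega⟩
    · intro a ha
      simp only [Finset.mem_filter, Finset.mem_range] at ha
      obtain ⟨-, u, hu⟩ := ha
      omega
    · intro j _
      omega
    · intro a ha
      simp only [Finset.mem_filter, Finset.mem_range] at ha
      obtain ⟨-, u, hu⟩ := ha
      have : 2 * (a / 2) = a := by omega
      rw [this]
  rw [← hL, hP, hR]

lemma T0_le_T1 (k s d : ℕ) (hs : 1 ≤ s) (hd1 : 1 ≤ d)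
    (hkap : k + 1 ≤ 2 * s * d + d + s) :
    (k - 2 * s).choose d ≤ 2 * s * ((k - 2 * s).choose (d - 1)) := by
  set m := k - 2 * s with hm
  by_cases hdm : d ≤ m
  · have h := choose_pred_right m d hd1 hdm
    have h2 : m - d + 1 ≤ 2 * s * d := by
      have hgen : ∀ P : ℕ, s ≤ P → k + 1 ≤ P + d + s → m - d + 1 ≤ P := by
        intro P hp1 hp2
        omega
      refine hgen (2 * s * d) ?_ hkap
      calc s ≤ s * (2 * d) := Nat.le_mul_of_pos_right s (by omega)
        _ = 2 * s * d := by ring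
    have h3 : m.choose d * d ≤ (2 * s * (m.choose (d - 1))) * d := by
      rw [h]
      calc m.choose (d - 1) * (m - d + 1) ≤ m.choose (d - 1) * (2 * s * d) :=
            Nat.mul_le_mul_left _ h2
        _ = (2 * s * (m.choose (d - 1))) * d := by ring
    exact Nat.le_of_mul_le_mul_right h3 (by omega)
  · rw [Nat.choose_eq_zero_of_lt (by omega)]
    exact Nat.zero_le _

-- (iii) doubling for middle j
lemma mid_doubling (s j : ℕ) (hj1 : 1 ≤ j) (hjs : j + 1 ≤ s) :
    2 * s.choose j ≤ (2 * s).choose (2 * j) := by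
  have hv : (2 * s).choose (2 * j) = ∑ i ∈ Finset.range (2 * j + 1), s.choose i * s.choose (2 * j - i) := by
    have : 2 * s = s + s := by ring
    rw [this, vander]
  have hterm : s.choose j * s.choose (2 * j - j) ≤ (2 * s).choose (2 * j) := by
    rw [hv]
    exact Finset.single_le_sum (f := fun i => s.choose i * s.choose (2 * j - i))
      (fun i _ => Nat.zero_le _) (Finset.mem_range.mpr (by omega : j < 2 * j + 1))
  have hjj : 2 * j - j = j := by omega
  rw [hjj] at hterm
  have h2 : 2 ≤ s.choose j := by
    have hps : s = (s - 1) + 1 := by omega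
    have hpj : j = (j - 1) + 1 := by omega
    rw [hps, hpj, Nat.choose_succ_succ]
    have p1 : 0 < (s - 1).choose (j - 1) := Nat.choose_pos (by omega)
    have p2 : 0 < (s - 1).choose (j - 1 + 1) := Nat.choose_pos (by omega)
    simp only [Nat.succ_eq_add_one] at *
    omega
  nlinarith [hterm, h2, Nat.zero_le (s.choose j)]

lemma choose_step (m a : ℕ) (h : 2 * a + 2 ≤ m) : m.choose a ≤ m.choose (a + 1) :=
  Nat.choose_le_succ_of_lt_half_left (by omega)

lemma bSum_bound (k s d : ℕ) (hs : 1 ≤ s) (hsk : 2 * s ≤ k) (hd1 : 1 ≤ d) (h2d : 2 * d ≤ k)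
    (hkap : k + 1 ≤ 2 * s * d + d + s) :
    5 * bSum s (k - 2 * s) d ≤ 3 * k.choose d := by
  set m := k - 2 * s with hm
  set T : ℕ → ℕ := fun i => (2 * s).choose i * m.choose (d - i) with hT
  have hC : k.choose d = ∑ i ∈ Finset.range (d + 1), T i := by
    have h : k = 2 * s + m := by omega
    nth_rewrite 1 [h]
    rw [vander]
  have hT0 : T 0 = m.choose d := by simp [hT]
  have hT1 : T 1 = 2 * s * m.choose (d - 1) := by simp [hT]
  have hT01 : T 0 ≤ T 1 := by
    rw [hT0, hT1]
    exact T0_le_T1 k s d hs hd1 hkap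
  have hsplit : ∑ i ∈ Finset.range (d + 1), T i
      = T 0 + T 1 + ∑ i ∈ Finset.Ico 2 (d + 1), T i := by
    rw [Finset.range_eq_Ico, Finset.sum_eq_sum_Ico_succ_bot (by omega : 0 < d + 1),
      Finset.sum_eq_sum_Ico_succ_bot (by omega : 1 < d + 1)]
    norm_num [add_assoc]
  -- decompose bSum
  have hb0 : (Nat.choose s 0 * m.choose (d - 2 * 0)) = m.choose d := by simp
  by_cases hs2 : 2 ≤ s
  · -- general case
    have hbsplit : 5 * bSum s m d
        = 5 * (m.choose d) + ∑ j ∈ Finset.Ico 1 (d / 2 + 1), 5 * (s.choose j * m.choose (d - 2 * j)) := by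
      rw [bSum, Finset.mul_sum, Finset.range_eq_Ico,
        Finset.sum_eq_sum_Ico_succ_bot (by omega : 0 < d / 2 + 1)]
      rw [hb0]
    set I := Finset.Ico 1 (min (s + 1) (d / 2 + 1)) with hI
    have hdrop : ∑ j ∈ Finset.Ico 1 (d / 2 + 1), 5 * (s.choose j * m.choose (d - 2 * j))
        = ∑ j ∈ I, 5 * (s.choose j * m.choose (d - 2 * j)) := by
      apply (Finset.sum_subset _ _).symm
      · intro x hx
        simp only [hI, Finset.mem_Ico, lt_min_iff] at hx ⊢
        omega
      · intro x hx1 hx2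
        simp only [hI, Finset.mem_Ico, lt_min_iff] at hx1 hx2
        have hxs : s < x := by omega
        rw [Nat.choose_eq_zero_of_lt hxs]
        ring
    set f : ℕ → ℕ := fun j => if j < s then 2 * j else 2 * s - 1 with hf
    have claim1 : ∀ j ∈ I, 5 * (s.choose j * m.choose (d - 2 * j)) ≤ 3 * T (f j) := by
      intro j hj
      simp only [hI, Finset.mem_Ico, lt_min_iff] at hj
      obtain ⟨hj1, hjs', hjd⟩ := hj
      by_cases hjlt : j < s
      · have hmd := mid_doubling s j hj1 (by omega)
        simp only [hf, if_pos hjlt, hT]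
        calc 5 * (s.choose j * m.choose (d - 2 * j))
            ≤ 3 * (2 * s.choose j) * m.choose (d - 2 * j) := by nlinarith [Nat.zero_le (s.choose j * m.choose (d - 2 * j))]
          _ ≤ 3 * ((2 * s).choose (2 * j)) * m.choose (d - 2 * j) := by
              apply Nat.mul_le_mul_right
              exact Nat.mul_le_mul_left 3 hmd
          _ = 3 * ((2 * s).choose (2 * j) * m.choose (d - 2 * j)) := by ring
      · have hjeq : j = s := by omega
        have h2sd : 2 * s ≤ d := by omega
        simp only [hjeq]
        have hstep : m.choose (d - 2 * s) ≤ m.choose (d - 2 * s + 1) := by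
          apply choose_step
          omega
        have hidx : d - (2 * s - 1) = d - 2 * s + 1 := by omega
        have hch : (2 * s).choose (2 * s - 1) = 2 * s := by
          have h1 : 2 * s - (2 * s - 1) = 1 := by omega
          have := Nat.choose_symm (show 2 * s - 1 ≤ 2 * s by omega)
          rw [h1] at this
          rw [← this, Nat.choose_one_right]
        simp only [hf, if_neg (by omega : ¬ s < s), hT, hch, hidx, Nat.choose_self, one_mul]
        calc 5 * m.choose (d - 2 * s) ≤ 5 * m.choose (d - 2 * s + 1) := Nat.mul_le_mul_left 5 hstep
          _ ≤ 3 * (2 * s * m.choose (d - 2 * s + 1)) := by nlinarith [Nat.zero_le (m.choose (d - 2 * s + 1))]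
    have claim2 : ∑ j ∈ I, 3 * T (f j) ≤ 3 * ∑ i ∈ Finset.Ico 2 (d + 1), T i := by
      have hinj : ∀ x ∈ I, ∀ y ∈ I, f x = f y → x = y := by
        intro x hx y hy hxy
        simp only [hI, Finset.mem_Ico, lt_min_iff] at hx hy
        simp only [hf] at hxy
        by_cases h1 : x < s <;> by_cases h2 : y < s <;> simp [h1, h2] at hxy <;> omega
      calc ∑ j ∈ I, 3 * T (f j) = ∑ i ∈ I.image f, 3 * T i := (Finset.sum_image (f := fun i => 3 * T i) (g := f) hinj).symm
        _ ≤ ∑ i ∈ Finset.Ico 2 (d + 1), 3 * T i := by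
            apply Finset.sum_le_sum_of_subset
            intro i hi
            simp only [Finset.mem_image] at hi
            obtain ⟨j, hj, hji⟩ := hi
            simp only [hI, Finset.mem_Ico, lt_min_iff] at hj
            simp only [hf] at hji
            simp only [Finset.mem_Ico]
            by_cases hjlt : j < s
            · rw [if_pos hjlt] at hji
              omega
            · rw [if_neg hjlt] at hji
              omega
        _ = 3 * ∑ i ∈ Finset.Ico 2 (d + 1), T i := by rw [Finset.mul_sum]
    calc 5 * bSum s m d
        = 5 * m.choose d + ∑ j ∈ I, 5 * (s.choose j * m.choose (d - 2 * j)) := by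
          rw [hbsplit, hdrop]
      _ ≤ (3 * T 0 + 2 * T 1) + ∑ j ∈ I, 3 * T (f j) := by
          apply Nat.add_le_add
          · rw [hT0] at hT01 ⊢
            omega
          · exact Finset.sum_le_sum claim1
      _ ≤ (3 * T 0 + 2 * T 1) + 3 * ∑ i ∈ Finset.Ico 2 (d + 1), T i := by
          exact Nat.add_le_add_left claim2 _
      _ ≤ 3 * (T 0 + T 1 + ∑ i ∈ Finset.Ico 2 (d + 1), T i) := by omega
      _ = 3 * k.choose d := by rw [hC, hsplit]
  · -- s = 1
    have hs1 : s = 1 := by omega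
    subst hs1
    have hT2 : T 2 = m.choose (d - 2) := by simp [hT]
    by_cases hd2 : 2 ≤ d
    · have hbs : bSum 1 m d = m.choose d + m.choose (d - 2) := by
        rw [bSum, Finset.range_eq_Ico,
          Finset.sum_eq_sum_Ico_succ_bot (by omega : 0 < d / 2 + 1),
          Finset.sum_eq_sum_Ico_succ_bot (by omega : 1 < d / 2 + 1)]
        have hrest : ∑ j ∈ Finset.Ico 2 (d / 2 + 1), Nat.choose 1 j * m.choose (d - 2 * j) = 0 := by
          apply Finset.sum_eq_zero
          intro j hj
          simp only [Finset.mem_Ico] at hj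
          rw [Nat.choose_eq_zero_of_lt (by omega)]
          ring
        rw [hrest]
        simp
      have hstep2 : m.choose (d - 2) ≤ m.choose (d - 1) := by
        have h := choose_step m (d - 2) (by omega)
        have : d - 2 + 1 = d - 1 := by omega
        rwa [this] at h
      have hT2le : ∑ i ∈ Finset.Ico 2 (d + 1), T i ≥ T 2 :=
        Finset.single_le_sum (fun i _ => Nat.zero_le _) (Finset.mem_Ico.mpr (by omega))
      rw [hbs, hC, hsplit, hT0, hT1, hT2] at *
      rw [hT0] at hT01
      omega
    · have hd1' : d = 1 := by omega
      subst hd1'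
      have hbs : bSum 1 m 1 = m.choose 1 := by
        rw [bSum]
        norm_num
      rw [hbs, hC, hsplit]
      have hrest : ∑ i ∈ Finset.Ico 2 (1 + 1), T i = 0 := by
        rw [show Finset.Ico 2 (1+1) = ∅ by rfl]
        simp
      rw [hrest, hT0, hT1] at *
      rw [hT0] at hT01
      omega

lemma altSum_eq_sub (k s d : ℕ) :
    altSum k s d = (evenSum k s d : ℤ) - (oddSum k s d : ℤ) := by
  rw [altSum, evenSum, oddSum]
  push_cast
  rw [← Finset.sum_sub_distrib]
  apply Finset.sum_congr rfl
  intro i _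
  by_cases hi : Even i
  · rw [hi.neg_one_pow]
    simp [hi]
  · rw [(Nat.not_even_iff_odd.mp hi).neg_one_pow]
    simp [hi]

lemma abs_altB_le (s m d : ℕ) : |altB s m d| ≤ (bSum s m d : ℤ) := by
  rw [altB, bSum]
  push_cast
  refine le_trans (Finset.abs_sum_le_sum_abs _ _) ?_
  apply Finset.sum_le_sum
  intro j _
  rw [abs_mul, abs_pow, abs_neg, abs_one, one_pow, one_mul]
  rw [abs_mul, Nat.abs_cast, Nat.abs_cast]

lemma psum_norm (p : ℕ → Prop) [DecidablePred p] (k s d : ℕ) (hdk : d ≤ k) :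
    (∑ i ∈ Finset.range (d + 1), if p i then s.choose i * (k - s).choose (d - i) else 0)
    = ∑ i ∈ (Finset.range (k + 1)).filter
        (fun i => p i ∧ i ≤ s ∧ i ≤ d ∧ d - i ≤ k - s), s.choose i * (k - s).choose (d - i) := by
  rw [Finset.sum_filter]
  have step1 : (∑ i ∈ Finset.range (d + 1), if p i then s.choose i * (k - s).choose (d - i) else 0)
      = ∑ i ∈ Finset.range (d + 1),
          if p i ∧ i ≤ s ∧ i ≤ d ∧ d - i ≤ k - s then s.choose i * (k - s).choose (d - i) else 0 := by
    apply Finset.sum_congr rfl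
    intro i hi
    simp only [Finset.mem_range] at hi
    by_cases hp : p i
    · by_cases h1 : i ≤ s
      · by_cases h2 : d - i ≤ k - s
        · rw [if_pos hp, if_pos ⟨hp, h1, by omega, h2⟩]
        · rw [if_pos hp, if_neg (by tauto),
            (Nat.choose_eq_zero_of_lt (show k - s < d - i by omega) : (k - s).choose (d - i) = 0),
            Nat.mul_zero]
      · rw [if_pos hp, if_neg (by tauto),
          (Nat.choose_eq_zero_of_lt (show s < i by omega) : s.choose i = 0), Nat.zero_mul]
    · rw [if_neg hp, if_neg (by tauto)]
  rw [step1]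
  apply Finset.sum_subset (Finset.range_subset_range.mpr (by omega : d + 1 ≤ k + 1))
  intro x _ hx2
  simp only [Finset.mem_range] at hx2
  rw [if_neg (fun h => absurd h.2.2.1 (by omega))]

lemma psum_flip (p q : ℕ → Prop) [DecidablePred p] [DecidablePred q]
    (k s d : ℕ) (hsk : s ≤ k) (hdk : d ≤ k)
    (hpq : ∀ i, i ≤ s → (p i ↔ q (s - i))) :
    (∑ i ∈ Finset.range (d + 1), if p i then s.choose i * (k - s).choose (d - i) else 0)
    = ∑ i ∈ Finset.range ((k - d) + 1), if q i then s.choose i * (k - s).choose ((k - d) - i) else 0 := by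
  rw [psum_norm p k s d hdk, psum_norm q k s (k - d) (by omega)]
  apply Finset.sum_nbij' (fun i => s - i) (fun i => s - i)
  · intro a ha
    simp only [Finset.mem_filter, Finset.mem_range] at ha ⊢
    obtain ⟨h0, hp, h1, h2, h3⟩ := ha
    exact ⟨by omega, (hpq a h1).mp hp, by omega, by omega, by omega⟩
  · intro b hb
    simp only [Finset.mem_filter, Finset.mem_range] at hb ⊢
    obtain ⟨h0, hq, h1, h2, h3⟩ := hb
    have hq' : q (s - (s - b)) := by
      have : s - (s - b) = b := by omega
      rwa [this]
    exact ⟨by omega, (hpq (s - b) (by omega)).mpr hq', by omega, by omega, by omega⟩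
  · intro a ha
    simp only [Finset.mem_filter, Finset.mem_range] at ha
    omega
  · intro b hb
    simp only [Finset.mem_filter, Finset.mem_range] at hb
    omega
  · intro a ha
    simp only [Finset.mem_filter, Finset.mem_range] at ha
    obtain ⟨h0, hp, h1, h2, h3⟩ := ha
    have e1 : s.choose (s - a) = s.choose a := Nat.choose_symm h1
    have e2 : (k - d) - (s - a) = (k - s) - (d - a) := by omega
    have e3 : (k - s).choose ((k - s) - (d - a)) = (k - s).choose (d - a) := Nat.choose_symm h3
    rw [e1, e2, e3]

lemma compl_even (k s d : ℕ) (hse : Even s) (hsk : s ≤ k) (hdk : d ≤ k) :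
    evenSum k s d = evenSum k s (k - d) := by
  rw [evenSum, evenSum]
  exact psum_flip Even Even k s d hsk hdk
    (fun i hi => by rw [Nat.even_sub hi]; tauto)

lemma compl_odd (k s d : ℕ) (hso : ¬ Even s) (hsk : s ≤ k) (hdk : d ≤ k) :
    evenSum k s d = oddSum k s (k - d) := by
  rw [evenSum, oddSum]
  exact psum_flip Even (fun j => ¬ Even j) k s d hsk hdk
    (fun i hi => by rw [Nat.even_sub hi]; tauto)

lemma hard (k s d : ℕ) (hs : 1 ≤ s) (hsk : 2 * s ≤ k) (hd1 : 1 ≤ d) (h2d : 2 * d ≤ k)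
    (hkap : k + 1 ≤ 2 * s * d + d + s) :
    5 * evenSum k s d ≤ 4 * k.choose d ∧ k.choose d ≤ 5 * evenSum k s d := by
  have hEO : evenSum k s d + oddSum k s d = k.choose d := even_add_odd k s d (by omega)
  have h1 : altSum k s d = (evenSum k s d : ℤ) - oddSum k s d := altSum_eq_sub k s d
  have h2 : altSum k s d = altB s (k - 2 * s) d := alt_eq k s d hsk
  have h3 := abs_altB_le s (k - 2 * s) d
  have h4 := bSum_bound k s d hs hsk hd1 h2d hkap
  rw [h2] at h1
  have h5 := abs_le.mp h3
  obtain ⟨h5a, h5b⟩ := h5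
  omega


lemma u1_le_odd (k s d : ℕ) (hd1 : 1 ≤ d) :
    s * (k - s).choose (d - 1) ≤ oddSum k s d := by
  have h := Finset.single_le_sum
    (f := fun i => if ¬ Even i then s.choose i * (k - s).choose (d - i) else 0)
    (fun i _ => Nat.zero_le _) (Finset.mem_range.mpr (by omega : 1 < d + 1))
  rw [oddSum]
  simpa using h

lemma u0_le_even (k s d : ℕ) :
    (k - s).choose d ≤ evenSum k s d := by
  have h := Finset.single_le_sum
    (f := fun i => if Even i then s.choose i * (k - s).choose (d - i) else 0)
    (fun i _ => Nat.zero_le _) (Finset.mem_range.mpr (by omega : 0 < d + 1))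
  simpa [evenSum] using h

lemma P1' (k s d : ℕ) (hs : 1 ≤ s) (hsk : 2 * s ≤ k) (hd1 : 1 ≤ d)
    (hlt : (2 * s + 1) * d + s ≤ k) :
    2 * (s : ℝ) * d * (k.choose d : ℝ) ≤ 5 * ((k : ℝ) - d + 1) * (oddSum k s d : ℝ) := by
  have hdk : d ≤ k := by nlinarith [hlt, hs, hd1]
  have hrb := ratio_bound k s (d - 1) hs hsk (by
    have h1 : (2 * s + 1) * (d - 1) ≤ (2 * s + 1) * d := Nat.mul_le_mul_left _ (by omega)
    omega)
  have hcp := choose_pred_right k d hd1 hdk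
  have hu1 := u1_le_odd k s d hd1
  have hkd : ((k - d + 1 : ℕ) : ℝ) = (k : ℝ) - d + 1 := by
    push_cast [Nat.cast_sub hdk]
    ring
  have hcpR : (k.choose d : ℝ) * d = (k.choose (d - 1) : ℝ) * ((k : ℝ) - d + 1) := by
    rw [← hkd]
    exact_mod_cast hcp
  have hu1R : (s : ℝ) * ((k - s).choose (d - 1) : ℝ) ≤ (oddSum k s d : ℝ) := by
    exact_mod_cast hu1
  have hs0 : (0 : ℝ) ≤ (s : ℝ) := by positivity
  have hkd0 : (0 : ℝ) < (k : ℝ) - d + 1 := by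
    have : (d : ℝ) ≤ (k : ℝ) := by exact_mod_cast hdk
    linarith
  have step1 : (2 : ℝ) / 5 * (k.choose (d - 1) : ℝ) * s ≤ ((k - s).choose (d - 1) : ℝ) * s :=
    mul_le_mul_of_nonneg_right hrb hs0
  have step2 : ((k - s).choose (d - 1) : ℝ) * s ≤ (oddSum k s d : ℝ) := by
    rw [mul_comm]
    exact hu1R
  nlinarith [step1, step2, hcpR, hkd0, hs0]

lemma P2' (k s d : ℕ) (hs : 1 ≤ s) (hsk : 2 * s ≤ k) (hd1 : 1 ≤ d)
    (hlt : (2 * s + 1) * d + s ≤ k) :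
    2 * (s : ℝ) * d * (k.choose d : ℝ) ≤ 5 * ((k : ℝ) - d + 1) * (evenSum k s d : ℝ) := by
  have hdk : d ≤ k := by nlinarith [hlt, hs, hd1]
  have hrb := ratio_bound k s d hs hsk (by omega)
  have hu0 := u0_le_even k s d
  have hu0R : ((k - s).choose d : ℝ) ≤ (evenSum k s d : ℝ) := by exact_mod_cast hu0
  have h2sd : (2 : ℝ) * s * d ≤ (k : ℝ) - d + 1 := by
    have hn : 2 * s * d + d + s ≤ k := by nlinarith [hlt]
    have : ((2 * s * d : ℕ) : ℝ) + d + s ≤ (k : ℝ) := by exact_mod_cast hn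
    push_cast at this
    linarith
  have hC0 : (0 : ℝ) ≤ (k.choose d : ℝ) := by positivity
  have hkd0 : (0 : ℝ) < (k : ℝ) - d + 1 := by
    have : (d : ℝ) ≤ (k : ℝ) := by exact_mod_cast hdk
    linarith
  nlinarith [hrb, hu0R, h2sd, hC0, hkd0]

lemma nat_of_lt_kappa (k s d : ℕ) (hsk' : s ≤ k) (h : (d : ℝ) < kappa k s) :
    (2 * s + 1) * d + s ≤ k := by
  have h2s1 : (0 : ℝ) < 2 * (s : ℝ) + 1 := by positivity
  rw [kappa, lt_div_iff₀ h2s1] at h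
  have hcast : (((2 * s + 1) * d : ℕ) : ℝ) < ((k - s + 1 : ℕ) : ℝ) := by
    push_cast [Nat.cast_sub hsk']
    nlinarith [h]
  have hnat : (2 * s + 1) * d < k - s + 1 := by exact_mod_cast hcast
  generalize hg : (2 * s + 1) * d = X at hnat ⊢
  omega

lemma nat_of_kappa_le (k s d : ℕ) (hsk' : s ≤ k) (h : kappa k s ≤ (d : ℝ)) :
    k + 1 ≤ 2 * s * d + d + s := by
  have h2s1 : (0 : ℝ) < 2 * (s : ℝ) + 1 := by positivity
  rw [kappa, div_le_iff₀ h2s1] at h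
  have hcast : ((k - s + 1 : ℕ) : ℝ) ≤ (((2 * s + 1) * d : ℕ) : ℝ) := by
    push_cast [Nat.cast_sub hsk']
    nlinarith [h]
  have hnat : k - s + 1 ≤ (2 * s + 1) * d := by exact_mod_cast hcast
  have hexp : (2 * s + 1) * d = 2 * s * d + d := by ring
  rw [hexp] at hnat
  generalize hg : 2 * s * d = X at hnat ⊢
  omega

theorem stmt0 (k s d : ℕ) (hs1 : 1 ≤ s) (hs2 : 2 * s ≤ k) (hd1 : 1 ≤ d) (hd2 : d ≤ k - 1) :
    (2 * d ≤ k →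
      (((d : ℝ) < kappa k s →
          (evenSum k s d : ℝ) ≤
            (1 - 2 * s / (5 * (((k : ℝ) - d + 1) / d))) * (k.choose d : ℝ)) ∧
        (kappa k s ≤ (d : ℝ) →
          (evenSum k s d : ℝ) ≤ (4 / 5) * (k.choose d : ℝ)))) ∧
    (k < 2 * d →
      (((k : ℝ) - kappa k s < (d : ℝ) →
          (evenSum k s d : ℝ) ≤
            (1 - 2 * s / (5 * (((d : ℝ) + 1) / ((k : ℝ) - d)))) * (k.choose d : ℝ)) ∧
        ((d : ℝ) ≤ (k : ℝ) - kappa k s →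
          (evenSum k s d : ℝ) ≤ (4 / 5) * (k.choose d : ℝ)))) := by
  have hsk' : s ≤ k := by omega
  have hdk : d ≤ k := by omega
  have hdR : (d : ℝ) ≤ (k : ℝ) := by exact_mod_cast hdk
  have hd0R : (0 : ℝ) < (d : ℝ) := by exact_mod_cast hd1
  have hEO : evenSum k s d + oddSum k s d = k.choose d := even_add_odd k s d hsk'
  have hEOR : (evenSum k s d : ℝ) + (oddSum k s d : ℝ) = (k.choose d : ℝ) := by
    exact_mod_cast hEO
  constructor
  · intro h2d
    constructor
    · -- case 1a : d < kappa
      intro hlt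
      have hnat := nat_of_lt_kappa k s d hsk' hlt
      have hP := P1' k s d hs1 hs2 hd1 hnat
      have hY : (0 : ℝ) < (k : ℝ) - d + 1 := by linarith
      have hOQ : 2 * (s : ℝ) * d * (k.choose d : ℝ) / (5 * ((k : ℝ) - d + 1)) ≤ (oddSum k s d : ℝ) := by
        rw [div_le_iff₀ (by positivity)]
        linarith [hP]
      have hRHS : (1 - 2 * s / (5 * (((k : ℝ) - d + 1) / d))) * (k.choose d : ℝ)
          = (k.choose d : ℝ) - 2 * (s : ℝ) * d * (k.choose d : ℝ) / (5 * ((k : ℝ) - d + 1)) := by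
        field_simp
      rw [hRHS]
      linarith [hOQ, hEOR]
    · -- case 1b : kappa ≤ d
      intro hge
      have hkap := nat_of_kappa_le k s d hsk' hge
      have hh := (hard k s d hs1 hs2 hd1 h2d hkap).1
      have : ((5 * evenSum k s d : ℕ) : ℝ) ≤ ((4 * k.choose d : ℕ) : ℝ) := by exact_mod_cast hh
      push_cast at this
      linarith
  · intro h2d
    set e := k - d with he
    have he1 : 1 ≤ e := by omega
    have h2e : 2 * e ≤ k := by omega
    have hek : e ≤ k := by omega
    have heR : ((e : ℕ) : ℝ) = (k : ℝ) - d := by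
      rw [he]
      push_cast [Nat.cast_sub hdk]
      ring
    have heR2 : (d : ℝ) + 1 = (k : ℝ) - (e : ℝ) + 1 := by rw [heR]; ring
    have heY : (0 : ℝ) < (k : ℝ) - (e : ℝ) + 1 := by
      have : ((e : ℕ) : ℝ) ≤ (k : ℝ) := by exact_mod_cast hek
      linarith
    have he0R : (0 : ℝ) < ((e : ℕ) : ℝ) := by exact_mod_cast he1
    have hCsym : k.choose e = k.choose d := by
      rw [he]
      exact Nat.choose_symm hdk
    have hEOe : evenSum k s e + oddSum k s e = k.choose e := even_add_odd k s e hsk'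
    constructor
    · -- case 2a : k - kappa < d, i.e. e < kappa
      intro hlt
      have hltE : ((e : ℕ) : ℝ) < kappa k s := by rw [heR]; linarith
      have hnat := nat_of_lt_kappa k s e hsk' hltE
      -- the target RHS
      have hRHS : (1 - 2 * s / (5 * (((d : ℝ) + 1) / ((k : ℝ) - d)))) * (k.choose d : ℝ)
          = (k.choose d : ℝ) - 2 * (s : ℝ) * e * (k.choose d : ℝ) / (5 * ((k : ℝ) - e + 1)) := by
        rw [← heR, ← heR2]
        field_simp
      rw [hRHS]
      by_cases hpar : Even s
      · -- evenSum k s d = evenSum k s e, bound via P1' at e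
        have hc := compl_even k s d hpar hsk' hdk
        rw [← he] at hc
        have hP := P1' k s e hs1 hs2 he1 hnat
        rw [hCsym] at hEOe
        have hEOeR : (evenSum k s e : ℝ) + (oddSum k s e : ℝ) = (k.choose d : ℝ) := by
          exact_mod_cast hEOe
        have hOQ : 2 * (s : ℝ) * e * (k.choose d : ℝ) / (5 * ((k : ℝ) - e + 1)) ≤ (oddSum k s e : ℝ) := by
          rw [div_le_iff₀ (by positivity)]
          rw [hCsym] at hP
          linarith [hP]
        rw [hc]
        linarith [hOQ, hEOeR]
      · -- evenSum k s d = oddSum k s e = C - evenSum k s e, bound via P2' at e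
        have hc := compl_odd k s d hpar hsk' hdk
        rw [← he] at hc
        have hP := P2' k s e hs1 hs2 he1 hnat
        rw [hCsym] at hEOe hP
        have hEOeR : (evenSum k s e : ℝ) + (oddSum k s e : ℝ) = (k.choose d : ℝ) := by
          exact_mod_cast hEOe
        have hEQ : 2 * (s : ℝ) * e * (k.choose d : ℝ) / (5 * ((k : ℝ) - e + 1)) ≤ (evenSum k s e : ℝ) := by
          rw [div_le_iff₀ (by positivity)]
          linarith [hP]
        rw [hc]
        linarith [hEQ, hEOeR]
    · -- case 2b : d ≤ k - kappa, i.e. kappa ≤ e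
      intro hge
      have hgeE : kappa k s ≤ ((e : ℕ) : ℝ) := by rw [heR]; linarith
      have hkap := nat_of_kappa_le k s e hsk' hgeE
      have hh := hard k s e hs1 hs2 he1 h2e hkap
      by_cases hpar : Even s
      · have hc := compl_even k s d hpar hsk' hdk
        rw [← he] at hc
        have h1 := hh.1
        rw [hCsym] at h1
        have : ((5 * evenSum k s e : ℕ) : ℝ) ≤ ((4 * k.choose d : ℕ) : ℝ) := by exact_mod_cast h1
        push_cast at this
        rw [hc]
        linarith
      · have hc := compl_odd k s d hpar hsk' hdk
        rw [← he] at hc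
        have h2 := hh.2
        rw [hCsym] at h2 hEOe
        have hcast : ((k.choose d : ℕ) : ℝ) ≤ ((5 * evenSum k s e : ℕ) : ℝ) := by exact_mod_cast h2
        have hEOeR : (evenSum k s e : ℝ) + (oddSum k s e : ℝ) = (k.choose d : ℝ) := by
          exact_mod_cast hEOe
        push_cast at hcast
        rw [hc]
        linarith
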